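/- Let A, B be nonempty closed convex subsets of a real Hilbert space X, let λ, μ ∈ (0, 2] with λ < 2 or μ < 2, set β̂ := (λ/(2−λ) + μ/(2−μ))^{-1}, and let α ∈ (0, 1 + β̂). Then the generalized Douglas–Rachford operator T := (1 − α)Id + α P_B^μ P_A^λ is α/(1 + β̂)-averaged, i.e., T = (1 − κ)Id + κR with κ := α/(1 + β̂) ∈ (0,1) and R nonexpansive. -/

import Mathlib

open RealInnerProductSpace


theorem proj_var {X : Type*} [NormedAddCommGroup X] [InnerProductSpace ℝ X]
    (A : Set X) (hAcvx : Convex ℝ A)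
    (P : X → X)
    (hP : ∀ x : X, P x ∈ A ∧ ∀ c ∈ A, dist x (P x) ≤ dist x c)
    (x : X) : ∀ c ∈ A, ⟪x - P x, c - P x⟫ ≤ 0 := by
  haveI : Nonempty A := ⟨⟨P x, (hP x).1⟩⟩
  refine (norm_eq_iInf_iff_real_inner_le_zero hAcvx (hP x).1).1 ?_
  apply le_antisymm
  · apply le_ciInf
    intro w
    simpa [dist_eq_norm] using (hP x).2 w w.2
  · have hb : BddBelow (Set.range fun w : A => ‖x - (w : X)‖) := by
      refine ⟨0, ?_⟩
      rintro r ⟨w, rfl⟩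
      positivity
    exact ciInf_le hb (⟨P x, (hP x).1⟩ : A)

theorem firm_of_proj {X : Type*} [NormedAddCommGroup X] [InnerProductSpace ℝ X]
    (A : Set X) (hAcvx : Convex ℝ A)
    (P : X → X)
    (hP : ∀ x : X, P x ∈ A ∧ ∀ c ∈ A, dist x (P x) ≤ dist x c)
    (x y : X) : ‖P x - P y‖^2 ≤ ⟪x - y, P x - P y⟫ := by
  have h1 := proj_var A hAcvx P hP x (P y) (hP y).1
  have h2 := proj_var A hAcvx P hP y (P x) (hP x).1
  have key : ⟪x - y, P x - P y⟫ - ‖P x - P y‖^2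
      = -⟪x - P x, P y - P x⟫ - ⟪y - P y, P x - P y⟫ := by
    simp only [inner_sub_left, inner_sub_right, real_inner_self_eq_norm_sq]
    have c1 := real_inner_comm (P x) (P y)
    have c2 := real_inner_comm x (P y)
    have c3 := real_inner_comm y (P x)
    rw [norm_sub_sq_real]
    linarith [real_inner_comm (P x) (P y)]
  linarith


theorem relax_ineq {X : Type*} [NormedAddCommGroup X] [InnerProductSpace ℝ X]
    (lam : ℝ) (hl0 : 0 < lam) (hl2 : lam ≤ 2) (u p : X)
    (hfirm : ‖p‖^2 ≤ ⟪u, p⟫) :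
    ‖(1 - lam) • u + lam • p‖^2 + (2 - lam)/lam * ‖u - ((1 - lam) • u + lam • p)‖^2
      ≤ ‖u‖^2 := by
  have h1 : u - ((1 - lam) • u + lam • p) = lam • (u - p) := by module
  rw [h1]
  have e1 : ‖(1 - lam) • u + lam • p‖^2
      = (1-lam)^2*‖u‖^2 + 2*(lam*(1-lam))*⟪u,p⟫ + lam^2*‖p‖^2 := by
    rw [norm_add_sq_real, real_inner_smul_left, real_inner_smul_right, norm_smul, norm_smul]
    simp only [Real.norm_eq_abs, mul_pow, sq_abs]
    ring
  have e2 : ‖lam • (u - p)‖^2 = lam^2 * (‖u‖^2 - 2*⟪u,p⟫ + ‖p‖^2) := by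
    rw [norm_smul, mul_pow, norm_sub_sq_real]
    simp only [Real.norm_eq_abs, sq_abs]
    try ring
  have e3 : (2 - lam)/lam * (lam^2 * (‖u‖^2 - 2*⟪u,p⟫ + ‖p‖^2))
      = (2-lam)*lam*(‖u‖^2 - 2*⟪u,p⟫ + ‖p‖^2) := by
    field_simp
  rw [e1, e2, e3]
  nlinarith [mul_nonneg hl0.le (sub_nonneg.2 hfirm)]

theorem scalar_ineq (c1 c2 β a b : ℝ) (hc1 : 0 ≤ c1) (hc2 : 0 ≤ c2) (ha : 0 ≤ a) (hb : 0 ≤ b)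
    (hβ : (β = 0) ∨ (0 < c1 ∧ 0 < c2 ∧ β = c1*c2/(c1+c2))) :
    β*(a+b)^2 ≤ c1*a^2 + c2*b^2 := by
  rcases hβ with rfl | ⟨h1, h2, rfl⟩
  · have hz : (0:ℝ)*(a+b)^2 = 0 := by ring
    rw [hz]
    positivity
  · rw [div_mul_eq_mul_div, div_le_iff₀ (by linarith)]
    nlinarith [sq_nonneg (c1*a - c2*b)]

theorem R_step {X : Type*} [NormedAddCommGroup X] [InnerProductSpace ℝ X]
    (β : ℝ) (hβ : 0 ≤ β) (u w : X)
    (h : ‖w‖^2 + β*‖u-w‖^2 ≤ ‖u‖^2) : ‖u + (1+β) • (w-u)‖ ≤ ‖u‖ := by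
  have e0 : ‖u - w‖^2 = ‖u‖^2 - 2*⟪u,w⟫ + ‖w‖^2 := by
    rw [norm_sub_sq_real]
  have e1 : ‖u + (1+β) • (w-u)‖^2
      = ‖u‖^2 + 2*((1+β)*(⟪u,w⟫ - ‖u‖^2)) + (1+β)^2*(‖u‖^2 - 2*⟪u,w⟫ + ‖w‖^2) := by
    rw [norm_add_sq_real, real_inner_smul_right, norm_smul]
    simp only [Real.norm_eq_abs, mul_pow, sq_abs, inner_sub_right, real_inner_self_eq_norm_sq]
    rw [norm_sub_sq_real, real_inner_comm w u]
    ring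
  have hsq : ‖u + (1+β) • (w-u)‖^2 ≤ ‖u‖^2 := by
    rw [e1]
    rw [e0] at h
    nlinarith [mul_le_mul_of_nonneg_left h (by linarith : (0:ℝ) ≤ 1+β)]
  nlinarith [norm_nonneg (u + (1+β) • (w-u)), norm_nonneg u]

theorem gDR_averagedness {X : Type*} [NormedAddCommGroup X] [InnerProductSpace ℝ X]
    [CompleteSpace X]
    (A B : Set X) (hAne : A.Nonempty) (hBne : B.Nonempty)
    (hAcl : IsClosed A) (hBcl : IsClosed B)
    (hAcvx : Convex ℝ A) (hBcvx : Convex ℝ B)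
    (PA PB : X → X)
    (hPA : ∀ x : X, PA x ∈ A ∧ ∀ c ∈ A, dist x (PA x) ≤ dist x c)
    (hPB : ∀ x : X, PB x ∈ B ∧ ∀ c ∈ B, dist x (PB x) ≤ dist x c)
    (lam mu : ℝ) (hlam0 : 0 < lam) (hlam2 : lam ≤ 2)
    (hmu0 : 0 < mu) (hmu2 : mu ≤ 2) (hmin : lam < 2 ∨ mu < 2)
    (betaHat : ℝ)
    (hbetaHat : betaHat = if lam = 2 ∨ mu = 2 then 0
      else (lam / (2 - lam) + mu / (2 - mu))⁻¹)
    (alpha : ℝ) (halpha0 : 0 < alpha) (halpha1 : alpha < 1 + betaHat)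
    (T : X → X)
    (hT : ∀ x : X, T x = (1 - alpha) • x +
      alpha • ((1 - mu) • ((1 - lam) • x + lam • PA x) +
        mu • PB ((1 - lam) • x + lam • PA x)))
    (kappa : ℝ) (hkappa : kappa = alpha / (1 + betaHat)) :
    0 < kappa ∧ kappa < 1 ∧
      ∃ R : X → X, (∀ x y : X, ‖R x - R y‖ ≤ ‖x - y‖) ∧
        ∀ x : X, T x = (1 - kappa) • x + kappa • R x := by
  -- basic positivity facts about betaHat
  set c1 : ℝ := (2 - lam)/lam with hc1def
  set c2 : ℝ := (2 - mu)/mu with hc2def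
  have hc1 : 0 ≤ c1 := by
    apply div_nonneg <;> linarith
  have hc2 : 0 ≤ c2 := by
    apply div_nonneg <;> linarith
  have hβcases : (betaHat = 0) ∨ (0 < c1 ∧ 0 < c2 ∧ betaHat = c1*c2/(c1+c2)) := by
    by_cases hdeg : lam = 2 ∨ mu = 2
    · left; rw [hbetaHat, if_pos hdeg]
    · right
      push_neg at hdeg
      have hl2' : lam < 2 := lt_of_le_of_ne hlam2 hdeg.1
      have hm2' : mu < 2 := lt_of_le_of_ne hmu2 hdeg.2
      have hc1' : 0 < c1 := by apply div_pos <;> linarith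
      have hc2' : 0 < c2 := by apply div_pos <;> linarith
      refine ⟨hc1', hc2', ?_⟩
      rw [hbetaHat, if_neg (by push_neg; exact hdeg)]
      have hne1 : (2:ℝ) - lam ≠ 0 := by linarith
      have hne2 : (2:ℝ) - mu ≠ 0 := by linarith
      have hp1 : 0 < lam/(2-lam) := div_pos hlam0 (by linarith)
      have hp2 : 0 < mu/(2-mu) := div_pos hmu0 (by linarith)
      have hsum : lam/(2-lam) + mu/(2-mu) ≠ 0 := by positivity
      have hden : c1 + c2 ≠ 0 := by positivity
      rw [hc1def, hc2def] at hden ⊢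
      field_simp at hden ⊢
      field_simp [hlam0.ne', hmu0.ne', hne1, hne2] at hsum
      ring
  have hβ0 : 0 ≤ betaHat := by
    rcases hβcases with h | ⟨h1, h2, h3⟩
    · rw [h]
    · rw [h3]; positivity
  have h1β : 0 < 1 + betaHat := by linarith
  have hk0 : 0 < kappa := by rw [hkappa]; positivity
  have hk1 : kappa < 1 := by
    rw [hkappa, div_lt_one h1β]; exact halpha1
  refine ⟨hk0, hk1, ?_⟩
  -- the operators
  set Q : X → X := fun x => (1 - lam) • x + lam • PA x with hQ
  set S : X → X := fun x => (1 - mu) • Q x + mu • PB (Q x) with hS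
  -- key averagedness inequality for S
  have hkey : ∀ x y : X, ‖S x - S y‖^2 + betaHat * ‖(x - y) - (S x - S y)‖^2 ≤ ‖x - y‖^2 := by
    intro x y
    have hQd : Q x - Q y = (1 - lam) • (x - y) + lam • (PA x - PA y) := by
      simp only [hQ]; module
    have hSd : S x - S y = (1 - mu) • (Q x - Q y) + mu • (PB (Q x) - PB (Q y)) := by
      simp only [hS]; module
    have hfA : ‖PA x - PA y‖^2 ≤ ⟪x - y, PA x - PA y⟫ :=
      firm_of_proj A hAcvx PA hPA x y
    have hfB : ‖PB (Q x) - PB (Q y)‖^2 ≤ ⟪Q x - Q y, PB (Q x) - PB (Q y)⟫ :=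
      firm_of_proj B hBcvx PB hPB (Q x) (Q y)
    have hA := relax_ineq lam hlam0 hlam2 (x - y) (PA x - PA y) hfA
    rw [← hQd] at hA
    have hB := relax_ineq mu hmu0 hmu2 (Q x - Q y) (PB (Q x) - PB (Q y)) hfB
    rw [← hSd] at hB
    have htri : ‖(x - y) - (S x - S y)‖ ≤ ‖(x - y) - (Q x - Q y)‖ + ‖(Q x - Q y) - (S x - S y)‖ := by
      have : (x - y) - (S x - S y) = ((x - y) - (Q x - Q y)) + ((Q x - Q y) - (S x - S y)) := by
        abel
      rw [this]; exact norm_add_le _ _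
    have hsq : ‖(x - y) - (S x - S y)‖^2
        ≤ (‖(x - y) - (Q x - Q y)‖ + ‖(Q x - Q y) - (S x - S y)‖)^2 :=
      pow_le_pow_left₀ (norm_nonneg _) htri 2
    have hsc := scalar_ineq c1 c2 betaHat ‖(x - y) - (Q x - Q y)‖ ‖(Q x - Q y) - (S x - S y)‖
      hc1 hc2 (norm_nonneg _) (norm_nonneg _) hβcases
    have hmul := mul_le_mul_of_nonneg_left hsq hβ0
    linarith [hA, hB, hsc, hmul]
  -- define R
  refine ⟨fun x => x + (1 + betaHat) • (S x - x), ?_, ?_⟩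
  · intro x y
    have hId : (x + (1 + betaHat) • (S x - x)) - (y + (1 + betaHat) • (S y - y))
        = (x - y) + (1 + betaHat) • ((S x - S y) - (x - y)) := by
      module
    rw [hId]
    exact R_step betaHat hβ0 (x - y) (S x - S y) (hkey x y)
  · intro x
    have hTx : T x = (1 - alpha) • x + alpha • S x := hT x
    have hk : kappa * (1 + betaHat) = alpha := by
      rw [hkappa, div_mul_cancel₀]
      exact ne_of_gt h1β
    rw [hTx, ← hk]
    module
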